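/- arXiv:1006.2048 — 3 statements merged into one kernel-verified Lean document; each statement's English description precedes it below -/
import Mathlib

section
/- Suppose N ≥ 2 and w_1,…,w_N > 0, and define f(p, W) = T_c*·(1 − ∑_{i=1}^N p_i(p) − P_I(p)) + P_I(p) for p ∈ [0,1]. Then f(·, W) is strictly decreasing on [0,1], f(0, W) = 1, and f(1, W) = −(N − 1)·T_c*; consequently f(·, W) has a unique zero p* ∈ (0,1), with f(p, W) > 0 for p < p* and f(p, W) < 0 for p > p*. -/
open Finset

/-- Weighted attempt probability `p_i(p) = w_i p / (1 + (w_i - 1) p)`. -/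
noncomputable def wAttempt (w p : ℝ) : ℝ := w * p / (1 + (w - 1) * p)

/-- `P_I(p) = ∏ (1-p)/(1+(w_i-1) p)` for the weighted `p`-persistent scheme. -/
noncomputable def PIw (N : ℕ) (w : Fin N → ℝ) (p : ℝ) : ℝ :=
  ∏ i, (1 - p) / (1 + (w i - 1) * p)

/-- `P_T(p) = (p/(1-p)) ∑ w_i` for the weighted `p`-persistent scheme. -/
noncomputable def PTw (N : ℕ) (w : Fin N → ℝ) (p : ℝ) : ℝ :=
  (p / (1 - p)) * ∑ i, w i

/-- System throughput `S(p, W)` of the weighted `p`-persistent scheme. -/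
noncomputable def Ssys (N : ℕ) (EP σ Ts Tc : ℝ) (w : Fin N → ℝ) (p : ℝ) : ℝ :=
  EP * PTw N w p * PIw N w p /
    (PIw N w p * σ + PTw N w p * PIw N w p * (Ts - Tc) + (1 - PIw N w p) * Tc)

/-- `f(p, W) = T_c^* (1 - ∑ p_i(p) - P_I(p)) + P_I(p)`, with `T_c^* = T_c/σ`. -/
noncomputable def fW (N : ℕ) (σ Tc : ℝ) (w : Fin N → ℝ) (p : ℝ) : ℝ :=
  (Tc / σ) * (1 - (∑ i, wAttempt (w i) p) - PIw N w p) + PIw N w p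

lemma denom_pos {w p : ℝ} (hw : 0 < w) (hp0 : 0 ≤ p) (hp1 : p ≤ 1) :
    0 < 1 + (w - 1) * p := by
  rcases eq_or_lt_of_le hp1 with h | h
  · subst h; nlinarith
  · nlinarith [mul_nonneg hw.le hp0]

lemma wAttempt_nonneg {w p : ℝ} (hw : 0 < w) (hp0 : 0 ≤ p) (hp1 : p ≤ 1) :
    0 ≤ wAttempt w p := by
  have h := denom_pos hw hp0 hp1
  exact div_nonneg (by positivity) h.le

lemma wAttempt_le_one {w p : ℝ} (hw : 0 < w) (hp0 : 0 ≤ p) (hp1 : p ≤ 1) :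
    wAttempt w p ≤ 1 := by
  have h := denom_pos hw hp0 hp1
  rw [wAttempt, div_le_one h]; nlinarith

lemma wAttempt_strictMono {w : ℝ} (hw : 0 < w) {p q : ℝ} (hp0 : 0 ≤ p)
    (hpq : p < q) (hq1 : q ≤ 1) : wAttempt w p < wAttempt w q := by
  have hdp := denom_pos hw hp0 (le_of_lt (lt_of_lt_of_le hpq hq1))
  have hdq := denom_pos hw (le_trans hp0 hpq.le) hq1
  rw [wAttempt, wAttempt, div_lt_div_iff₀ hdp hdq]
  nlinarith

lemma one_sub_wAttempt {w p : ℝ} (hw : 0 < w) (hp0 : 0 ≤ p) (hp1 : p ≤ 1) :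
    (1 - p) / (1 + (w - 1) * p) = 1 - wAttempt w p := by
  have h := denom_pos hw hp0 hp1
  rw [wAttempt, eq_sub_iff_add_eq, ← add_div, div_eq_one_iff_eq h.ne']; ring

lemma PIw_eq (N : ℕ) (w : Fin N → ℝ) (hw : ∀ i, 0 < w i) {p : ℝ}
    (hp0 : 0 ≤ p) (hp1 : p ≤ 1) :
    PIw N w p = ∏ i, (1 - wAttempt (w i) p) := by
  unfold PIw
  exact Finset.prod_congr rfl fun i _ => one_sub_wAttempt (hw i) hp0 hp1

/-- Telescoping: `∏ x - ∏ y ≤ ∑ (x - y)` when `0 ≤ y ≤ x ≤ 1`. -/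
lemma prod_sub_prod_le {ι : Type*} (s : Finset ι) (x y : ι → ℝ)
    (h : ∀ i ∈ s, 0 ≤ y i ∧ y i ≤ x i ∧ x i ≤ 1) :
    ∏ i ∈ s, x i - ∏ i ∈ s, y i ≤ ∑ i ∈ s, (x i - y i) := by
  induction s using Finset.cons_induction with
  | empty => simp
  | cons a s ha ih =>
    simp only [Finset.prod_cons, Finset.sum_cons]
    obtain ⟨hy0, hyx, hx1⟩ := h a (Finset.mem_cons_self a s)
    have h' : ∀ i ∈ s, 0 ≤ y i ∧ y i ≤ x i ∧ x i ≤ 1 :=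
      fun i hi => h i (Finset.mem_cons_of_mem hi)
    have ih' := ih h'
    have hyprod : ∏ i ∈ s, y i ≤ 1 := by
      apply Finset.prod_le_one (fun i hi => (h' i hi).1)
        (fun i hi => le_trans (h' i hi).2.1 (h' i hi).2.2)
    have hyprod0 : 0 ≤ ∏ i ∈ s, y i :=
      Finset.prod_nonneg fun i hi => (h' i hi).1
    have key : x a * ∏ i ∈ s, x i - y a * ∏ i ∈ s, y i
        = x a * (∏ i ∈ s, x i - ∏ i ∈ s, y i) + (x a - y a) * ∏ i ∈ s, y i := by ring
    rw [key]
    have hx0 : 0 ≤ x a := le_trans hy0 hyx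
    have h1 : x a * (∏ i ∈ s, x i - ∏ i ∈ s, y i) ≤ ∑ i ∈ s, (x i - y i) := by
      calc x a * (∏ i ∈ s, x i - ∏ i ∈ s, y i)
          ≤ 1 * (∑ i ∈ s, (x i - y i)) := by
            have hs0 : 0 ≤ ∑ i ∈ s, (x i - y i) :=
              Finset.sum_nonneg fun i hi => sub_nonneg.2 (h' i hi).2.1
            have := mul_le_mul hx1 ih' ?_ (by norm_num)
            · linarith [this]
            · -- ∏x - ∏y could be negative? no: y ≤ x so prod y ≤ prod x
              have : ∏ i ∈ s, y i ≤ ∏ i ∈ s, x i :=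
                Finset.prod_le_prod (fun i hi => (h' i hi).1) (fun i hi => (h' i hi).2.1)
              linarith
        _ = ∑ i ∈ s, (x i - y i) := one_mul _
    have h2 : (x a - y a) * ∏ i ∈ s, y i ≤ x a - y a := by
      nlinarith
    linarith

lemma fW_strictAntiOn (N : ℕ) (hN : 2 ≤ N) (σ Tc : ℝ)
    (hσ : 0 < σ) (hTc : σ ≤ Tc) (w : Fin N → ℝ) (hw : ∀ i, 0 < w i) :
    StrictAntiOn (fW N σ Tc w) (Set.Icc 0 1) := by
  intro p hp q hq hpq
  obtain ⟨hp0, hp1⟩ := hp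
  obtain ⟨hq0, hq1⟩ := hq
  have ht1 : (1:ℝ) ≤ Tc / σ := (one_le_div hσ).2 hTc
  set t := Tc / σ with ht
  have hΔpos : 0 < ∑ i, (wAttempt (w i) q - wAttempt (w i) p) := by
    apply Finset.sum_pos
    · intro i _
      exact sub_pos.2 (wAttempt_strictMono (hw i) hp0 hpq hq1)
    · exact Finset.univ_nonempty_iff.2 ⟨⟨0, by omega⟩⟩
  have hD : PIw N w p - PIw N w q ≤ ∑ i, (wAttempt (w i) q - wAttempt (w i) p) := by
    rw [PIw_eq N w hw hp0 hp1, PIw_eq N w hw hq0 hq1]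
    have := prod_sub_prod_le Finset.univ
      (fun i => 1 - wAttempt (w i) p) (fun i => 1 - wAttempt (w i) q)
      (fun i _ => ⟨show (0:ℝ) ≤ 1 - wAttempt (w i) q by
          linarith [wAttempt_le_one (hw i) hq0 hq1],
        show 1 - wAttempt (w i) q ≤ 1 - wAttempt (w i) p by
          linarith [wAttempt_strictMono (hw i) hp0 hpq hq1],
        show 1 - wAttempt (w i) p ≤ 1 by
          linarith [wAttempt_nonneg (hw i) hp0 hp1]⟩)
    calc ∏ i, (1 - wAttempt (w i) p) - ∏ i, (1 - wAttempt (w i) q)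
        ≤ ∑ i, ((1 - wAttempt (w i) p) - (1 - wAttempt (w i) q)) := this
      _ = ∑ i, (wAttempt (w i) q - wAttempt (w i) p) := by
          apply Finset.sum_congr rfl; intros; ring
  -- fW p - fW q = t * Δ - (t - 1) * D
  have hexp : fW N σ Tc w p - fW N σ Tc w q
      = t * (∑ i, (wAttempt (w i) q - wAttempt (w i) p))
        - (t - 1) * (PIw N w p - PIw N w q) := by
    unfold fW
    rw [Finset.sum_sub_distrib]
    ring
  have : 0 < fW N σ Tc w p - fW N σ Tc w q := by
    rw [hexp]
    nlinarith [mul_le_mul_of_nonneg_left hD (by linarith : (0:ℝ) ≤ t - 1)]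
  linarith

lemma fW_zero (N : ℕ) (σ Tc : ℝ) (w : Fin N → ℝ) : fW N σ Tc w 0 = 1 := by
  unfold fW PIw wAttempt
  simp

lemma fW_one (N : ℕ) (hN : 2 ≤ N) (σ Tc : ℝ) (w : Fin N → ℝ) (hw : ∀ i, 0 < w i) :
    fW N σ Tc w 1 = -((N : ℝ) - 1) * (Tc / σ) := by
  have hPI : PIw N w 1 = 0 := by
    unfold PIw
    apply Finset.prod_eq_zero (Finset.mem_univ ⟨0, by omega⟩)
    simp
  have hA : ∀ i, wAttempt (w i) 1 = 1 := by
    intro i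
    unfold wAttempt
    have : 1 + (w i - 1) * 1 = w i := by ring
    rw [this, mul_one, div_self (hw i).ne']
  unfold fW
  rw [hPI, Finset.sum_congr rfl (fun i _ => hA i)]
  simp
  ring

lemma fW_continuousOn (N : ℕ) (σ Tc : ℝ) (w : Fin N → ℝ) (hw : ∀ i, 0 < w i) :
    ContinuousOn (fW N σ Tc w) (Set.Icc 0 1) := by
  have hden : ∀ i : Fin N, ∀ p ∈ Set.Icc (0:ℝ) 1, 1 + (w i - 1) * p ≠ 0 :=
    fun i p hp => (denom_pos (hw i) hp.1 hp.2).ne'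
  have hPI : ContinuousOn (PIw N w) (Set.Icc 0 1) := by
    unfold PIw
    apply continuousOn_finset_prod
    intro i _
    exact ContinuousOn.div (by fun_prop) (by fun_prop) (hden i)
  have hsum : ContinuousOn (fun p => ∑ i, wAttempt (w i) p) (Set.Icc (0:ℝ) 1) := by
    apply continuousOn_finset_sum
    intro i _
    unfold wAttempt
    exact ContinuousOn.div (by fun_prop) (by fun_prop) (hden i)
  unfold fW
  fun_prop

/-- `f(·, W)` is strictly decreasing on `[0,1]`, `f(0,W) = 1`, `f(1,W) = -(N-1) T_c^*`;
consequently it has a unique zero `p* ∈ (0,1)`, is positive before it and negative after it. -/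
theorem fW_strict_decreasing_unique_zero (N : ℕ) (hN : 2 ≤ N) (EP σ Ts Tc : ℝ)
    (hEP : 0 < EP) (hσ : 0 < σ) (hTc : σ ≤ Tc) (hTs : Tc ≤ Ts)
    (w : Fin N → ℝ) (hw : ∀ i, 0 < w i) :
    StrictAntiOn (fW N σ Tc w) (Set.Icc 0 1) ∧
    fW N σ Tc w 0 = 1 ∧
    fW N σ Tc w 1 = -((N : ℝ) - 1) * (Tc / σ) ∧
    ∃ pstar : ℝ, pstar ∈ Set.Ioo (0 : ℝ) 1 ∧ fW N σ Tc w pstar = 0 ∧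
      (∀ p' ∈ Set.Ioo (0 : ℝ) 1, fW N σ Tc w p' = 0 → p' = pstar) ∧
      (∀ p ∈ Set.Icc (0 : ℝ) 1, p < pstar → 0 < fW N σ Tc w p) ∧
      (∀ p ∈ Set.Icc (0 : ℝ) 1, pstar < p → fW N σ Tc w p < 0) := by
  have hanti := fW_strictAntiOn N hN σ Tc hσ hTc w hw
  have h0 := fW_zero N σ Tc w
  have h1 := fW_one N hN σ Tc w hw
  refine ⟨hanti, h0, h1, ?_⟩
  have ht : 0 < Tc / σ := div_pos (lt_of_lt_of_le hσ hTc) hσ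
  have hNR : (2:ℝ) ≤ (N:ℝ) := by exact_mod_cast hN
  have h1neg : fW N σ Tc w 1 < 0 := by
    rw [h1]; nlinarith
  have h0pos : (0:ℝ) < fW N σ Tc w 0 := by rw [h0]; norm_num
  have hcont := fW_continuousOn N σ Tc w hw
  have hmem : (0:ℝ) ∈ Set.Icc (fW N σ Tc w 1) (fW N σ Tc w 0) :=
    ⟨h1neg.le, h0pos.le⟩
  obtain ⟨pstar, hps, hfps⟩ := intermediate_value_Icc' (by norm_num : (0:ℝ) ≤ 1) hcont hmem
  have hps0 : pstar ≠ 0 := by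
    intro h; rw [h, h0] at hfps; norm_num at hfps
  have hps1 : pstar ≠ 1 := by
    intro h; rw [h] at hfps; rw [hfps] at h1neg; norm_num at h1neg
  have hpsIoo : pstar ∈ Set.Ioo (0:ℝ) 1 :=
    ⟨lt_of_le_of_ne hps.1 (Ne.symm hps0), lt_of_le_of_ne hps.2 hps1⟩
  refine ⟨pstar, hpsIoo, hfps, ?_, ?_, ?_⟩
  · intro p' hp' hfp'
    exact hanti.injOn (Set.Ioo_subset_Icc_self hp') hps (hfp'.trans hfps.symm)
  · intro p hp hlt
    have := hanti hp hps hlt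
    rw [hfps] at this
    exact this
  · intro p hp hlt
    have := hanti hps hp hlt
    rw [hfps] at this
    exact this
end

section
/- For every reset distribution q and N ≥ 2, the fixed-point attempt probability satisfies τ̂(q) ∈ [τ(m−1;0), τ(0;1)], where τ(m−1;0) and τ(0;1) are the fixed-point attempt probabilities of the RandomReset(m−1;0) and RandomReset(0;1) policies respectively. -/
open Finset

/-- `α_j(c) = (1-c) ∑_{i=j}^m 2^i c^{i-j} + 2^m c^{m-j}`. -/
noncomputable def alphaB (m j : ℕ) (c : ℝ) : ℝ :=
  (1 - c) * ∑ i ∈ Finset.Icc j m, (2 : ℝ) ^ i * c ^ (i - j) + (2 : ℝ) ^ m * c ^ (m - j)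

/-- `κ_0 = 2 / CW_min`. -/
noncomputable def kappa0 (CWmin : ℕ) : ℝ := 2 / (CWmin : ℝ)

/-- A reset distribution `q = (q_0, …, q_m)`. -/
def IsResetDist (m : ℕ) (q : Fin (m + 1) → ℝ) : Prop :=
  (∀ j, 0 ≤ q j) ∧ (∑ j, q j) = 1

/-- Conditional attempt probability `τ̂_c(q) = κ_0 / ∑_j q_j α_j(c)`. -/
noncomputable def tauHatC (m CWmin : ℕ) (q : Fin (m + 1) → ℝ) (c : ℝ) : ℝ :=
  kappa0 CWmin / ∑ j : Fin (m + 1), q j * alphaB m (j : ℕ) c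

/-- RandomReset(j; p₀) conditional attempt probability
`τ_c(j;p₀) = κ_0 / (p₀ α_j(c) + ((1-p₀)/(m-j)) ∑_{i=j+1}^m α_i(c))`. -/
noncomputable def tauRRC (m CWmin : ℕ) (j : ℕ) (p0 c : ℝ) : ℝ :=
  kappa0 CWmin /
    (p0 * alphaB m j c + ((1 - p0) / ((m : ℝ) - (j : ℝ))) * ∑ i ∈ Finset.Icc (j + 1) m, alphaB m i c)

/-- `τ ∈ [0,1]` is the fixed-point attempt probability `τ̂(q)` of the reset distribution `q`
for `N` nodes: `τ = τ̂_{1-(1-τ)^(N-1)}(q)`. -/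
def IsFixedPointQ (m CWmin N : ℕ) (q : Fin (m + 1) → ℝ) (τ : ℝ) : Prop :=
  τ ∈ Set.Icc (0 : ℝ) 1 ∧ τ = tauHatC m CWmin q (1 - (1 - τ) ^ (N - 1))

/-- `τ ∈ [0,1]` is the fixed-point attempt probability `τ(j;p₀)` of the RandomReset(j;p₀)
policy for `N` nodes: `τ = τ_{1-(1-τ)^(N-1)}(j;p₀)`. -/
def IsFixedPointRR (m CWmin N : ℕ) (j : ℕ) (p0 τ : ℝ) : Prop :=
  τ ∈ Set.Icc (0 : ℝ) 1 ∧ τ = tauRRC m CWmin j p0 (1 - (1 - τ) ^ (N - 1))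

lemma aux_geom (j M : ℕ) (c : ℝ) :
    (1 - c) * ∑ k ∈ Finset.range (M+1), (2:ℝ)^(j+k) * c^k
      = 2^j + (∑ k ∈ Finset.Icc 1 M, (2:ℝ)^(j+k-1) * c^k) - 2^(j+M)*c^(M+1) := by
  induction M with
  | zero => simp; ring
  | succ M ih =>
    rw [Finset.sum_range_succ, mul_add, ih, Finset.sum_Icc_succ_top (by omega : 1 ≤ M+1)]
    have h1 : j + (M+1) - 1 = j + M := by omega
    rw [h1]; ring_nf

lemma alphaB_eq (m j : ℕ) (hj : j ≤ m) (c : ℝ) :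
    alphaB m j c = 2^j + (∑ k ∈ Finset.Icc 1 (m-j), (2:ℝ)^(j+k-1) * c^k)
      + 2^m * c^(m-j) * (1-c) := by
  have hre : ∑ i ∈ Finset.Icc j m, (2 : ℝ) ^ i * c ^ (i - j)
      = ∑ k ∈ Finset.range ((m-j)+1), (2:ℝ)^(j+k) * c^k := by
    rw [← Finset.Ico_add_one_right_eq_Icc, Finset.sum_Ico_eq_sum_range]
    have : m + 1 - j = (m - j) + 1 := by omega
    rw [this]
    exact Finset.sum_congr rfl (fun k _ => by rw [Nat.add_sub_cancel_left])
  rw [alphaB, hre, aux_geom j (m-j) c]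
  have h2 : j + (m - j) = m := by omega
  rw [h2]; ring

lemma pow2sum (a b : ℕ) (h : a ≤ b) :
    ∑ k ∈ Finset.Ioc a b, (2:ℝ)^(k-1) = 2^b - 2^a := by
  induction b, h using Nat.le_induction with
  | base => simp
  | succ b hab ih =>
    rw [← Finset.Icc_add_one_left_eq_Ioc, Finset.sum_Icc_succ_top (by omega : a+1 ≤ b+1),
        Finset.Icc_add_one_left_eq_Ioc, ih]
    have : b + 1 - 1 = b := by omega
    rw [this, pow_succ]; ring

lemma alphaB_top (m : ℕ) (c : ℝ) : alphaB m m c = 2^m + 2^m * (1 - c) := by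
  rw [alphaB_eq m m le_rfl c]; simp

lemma alphaB_le_top (m j : ℕ) (hj : j ≤ m) (c : ℝ) (hc0 : 0 ≤ c) (hc1 : c ≤ 1) :
    alphaB m j c ≤ alphaB m m c := by
  rw [alphaB_eq m j hj c, alphaB_top]
  have hsum : ∑ k ∈ Finset.Icc 1 (m-j), (2:ℝ)^(j+k-1) * c^k
      ≤ 2^m - 2^j := by
    calc ∑ k ∈ Finset.Icc 1 (m-j), (2:ℝ)^(j+k-1) * c^k
        ≤ ∑ k ∈ Finset.Icc 1 (m-j), (2:ℝ)^(j+k-1) * 1 := by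
          apply Finset.sum_le_sum
          intro k hk
          have := pow_le_one₀ hc0 hc1 (n := k)
          have h2 : (0:ℝ) ≤ 2^(j+k-1) := by positivity
          nlinarith
      _ = ∑ k ∈ Finset.Ioc 0 (m-j), (2:ℝ)^(j) * 2^(k-1) := by
          rw [show Finset.Icc 1 (m-j) = Finset.Ioc 0 (m-j) by ext x; simp; omega]
          apply Finset.sum_congr rfl
          intro k hk
          have hk1 : 1 ≤ k := (Finset.mem_Ioc.mp hk).1
          rw [mul_one, ← pow_add]
          congr 1; omega
      _ = 2^j * (2^(m-j) - 2^0) := by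
          rw [← Finset.mul_sum, pow2sum 0 (m-j) (by omega)]
      _ = 2^m - 2^j := by
          have hp : (2:ℝ)^j * 2^(m-j) = 2^m := by
            rw [← pow_add]; congr 1; omega
          rw [mul_sub, hp, pow_zero, mul_one]
  have hlast : 2^m * c^(m-j) * (1-c) ≤ 2^m * (1-c) := by
    have h1 : c^(m-j) ≤ 1 := pow_le_one₀ hc0 hc1
    have h2 : (0:ℝ) ≤ 2^m := by positivity
    nlinarith [mul_nonneg (mul_nonneg h2 (sub_nonneg.mpr hc1)) (sub_nonneg.mpr h1)]
  linarith

lemma alphaB_bot_le (m j : ℕ) (hj : j ≤ m) (c : ℝ) (hc0 : 0 ≤ c) (hc1 : c ≤ 1) :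
    alphaB m 0 c ≤ alphaB m j c := by
  rw [alphaB_eq m 0 (by omega) c, alphaB_eq m j hj c]
  simp only [Nat.sub_zero, pow_zero, zero_add]
  set M := m - j with hM
  have hMm : M ≤ m := by omega
  -- split the sum over Icc 1 m
  have e1 : Finset.Icc 1 m = Finset.Ioc 0 m := by ext x; simp; omega
  have e2 : Finset.Icc 1 M = Finset.Ioc 0 M := by ext x; simp; omega
  have hsplit : ∑ k ∈ Finset.Icc 1 m, (2:ℝ)^(k-1) * c^k
      = (∑ k ∈ Finset.Ioc 0 M, (2:ℝ)^(k-1) * c^k) + ∑ k ∈ Finset.Ioc M m, (2:ℝ)^(k-1) * c^k := by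
    rw [e1, Finset.sum_Ioc_consecutive _ (by omega : 0 ≤ M) hMm]
  rw [hsplit]
  set S1 : ℝ := ∑ k ∈ Finset.Ioc 0 M, (2:ℝ)^(k-1) * c^k with hS1
  set S2 : ℝ := ∑ k ∈ Finset.Ioc M m, (2:ℝ)^(k-1) * c^k with hS2
  have hS1' : ∑ k ∈ Finset.Icc 1 M, (2:ℝ)^(j+k-1) * c^k = 2^j * S1 := by
    rw [hS1, Finset.mul_sum, ← e2]
    apply Finset.sum_congr rfl
    intro k hk
    have hk1 : 1 ≤ k := (Finset.mem_Icc.mp hk).1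
    rw [← mul_assoc, ← pow_add]
    congr 2; omega
  rw [hS1']
  -- bounds
  have hb1 : c^M * (2^M - 1) ≤ S1 := by
    calc c^M * ((2:ℝ)^M - 1) = ∑ k ∈ Finset.Ioc 0 M, (2:ℝ)^(k-1) * c^M := by
          rw [← Finset.sum_mul, pow2sum 0 M (by omega)]; ring
      _ ≤ S1 := by
          apply Finset.sum_le_sum
          intro k hk
          have hk2 := Finset.mem_Ioc.mp hk
          have : c^M ≤ c^k := pow_le_pow_of_le_one hc0 hc1 hk2.2
          have h2 : (0:ℝ) ≤ 2^(k-1) := by positivity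
          nlinarith
  have hb2 : S2 ≤ c^M * (2^m - 2^M) := by
    calc S2 ≤ ∑ k ∈ Finset.Ioc M m, (2:ℝ)^(k-1) * c^M := by
          apply Finset.sum_le_sum
          intro k hk
          have hk2 := Finset.mem_Ioc.mp hk
          have : c^k ≤ c^M := pow_le_pow_of_le_one hc0 hc1 (le_of_lt hk2.1)
          have h2 : (0:ℝ) ≤ 2^(k-1) := by positivity
          nlinarith
      _ = c^M * (2^m - 2^M) := by rw [← Finset.sum_mul, pow2sum M m hMm]; ring
  have hb3 : c^m ≤ c^M := pow_le_pow_of_le_one hc0 hc1 hMm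
  have hpow : (2:ℝ)^m = 2^j * 2^M := by rw [← pow_add]; congr 1; omega
  have h2j : (1:ℝ) ≤ 2^j := one_le_pow₀ (by norm_num)
  have hcM0 : (0:ℝ) ≤ c^M := by positivity
  have hcM1 : c^M ≤ 1 := pow_le_one₀ hc0 hc1
  have h2M : (1:ℝ) ≤ 2^M := one_le_pow₀ (by norm_num)
  have h2m0 : (0:ℝ) ≤ 2^m := by positivity
  nlinarith [mul_nonneg (sub_nonneg.mpr h2j) (sub_nonneg.mpr hcM1),
             mul_nonneg (sub_nonneg.mpr h2j) (sub_nonneg.mpr hb1),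
             mul_nonneg h2m0 (mul_nonneg (sub_nonneg.mpr hb3) (sub_nonneg.mpr hc1))]

lemma key_amgm (n : ℕ) (s : ℝ) (h0 : 0 ≤ s) (h1 : s ≤ 1) :
    (n:ℝ) * (1 - s) * s ^ (n-1) ≤ 1 - s ^ n := by
  have key : (n:ℝ) * s ^ (n-1) ≤ ∑ k ∈ Finset.range n, s ^ k := by
    calc (n:ℝ) * s ^ (n-1) = ∑ k ∈ Finset.range n, s ^ (n-1) := by
          rw [Finset.sum_const, Finset.card_range]; ring
      _ ≤ ∑ k ∈ Finset.range n, s ^ k := by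
          apply Finset.sum_le_sum
          intro k hk
          exact pow_le_pow_of_le_one h0 h1 (Nat.le_sub_one_of_lt (Finset.mem_range.mp hk))
  have geom : (1 - s) * ∑ k ∈ Finset.range n, s ^ k = 1 - s ^ n := by
    have := geom_sum_mul s n
    nlinarith [this]
  calc (n:ℝ) * (1 - s) * s^(n-1) = (1-s) * ((n:ℝ) * s^(n-1)) := by ring
    _ ≤ (1-s) * ∑ k ∈ Finset.range n, s ^ k :=
        mul_le_mul_of_nonneg_left key (by linarith)
    _ = 1 - s ^ n := geom

/-- derivative of `τ ↦ τ * (1 + (1-τ)^n)` -/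
lemma hasDerivAt_gm (n : ℕ) (τ : ℝ) :
    HasDerivAt (fun τ : ℝ => τ * (1 + (1-τ)^n))
      ((1 + (1-τ)^n) + τ * ((n:ℝ) * (1-τ)^(n-1) * (-1))) τ := by
  have h1 : HasDerivAt (fun τ : ℝ => 1 - τ) (-1) τ := (hasDerivAt_id τ).const_sub 1
  have h2 := h1.pow n
  have h3 := h2.const_add 1
  have := (hasDerivAt_id' τ).mul h3
  exact this.congr_deriv (by simp only [Pi.pow_apply]; ring)

lemma gm_strictMono (n : ℕ) (hn : 1 ≤ n) :
    StrictMonoOn (fun τ : ℝ => τ * (1 + (1-τ)^n)) (Set.Icc 0 1) := by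
  apply strictMonoOn_of_deriv_pos (convex_Icc 0 1)
  · fun_prop
  · intro τ hτ
    rw [interior_Icc] at hτ
    obtain ⟨h0, h1⟩ := hτ
    rw [(hasDerivAt_gm n τ).deriv]
    have hs0 : (0:ℝ) ≤ 1 - τ := by linarith
    have hs1 : (1:ℝ) - τ ≤ 1 := by linarith
    have hk := key_amgm n (1-τ) hs0 hs1
    have hsn : (0:ℝ) < (1-τ)^n := pow_pos (by linarith) n
    nlinarith [hk, hsn]

/-- derivative of `B τ = τ * c^M * (3 - 2c)`, `c = 1-(1-τ)^n`. -/
lemma B_monotone (n M : ℕ) (hn : 1 ≤ n) (hM : 1 ≤ M) :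
    MonotoneOn (fun τ : ℝ => τ * (1-(1-τ)^n)^M * (3 - 2*(1-(1-τ)^n))) (Set.Icc 0 1) := by
  have hder : ∀ τ : ℝ, HasDerivAt (fun τ : ℝ => τ * (1-(1-τ)^n)^M * (3 - 2*(1-(1-τ)^n)))
      (((1-(1-τ)^n)^M + τ * ((M:ℕ) * (1-(1-τ)^n)^(M-1) * ((n:ℝ) * (1-τ)^(n-1))))
        * (3 - 2*(1-(1-τ)^n))
       + (τ * (1-(1-τ)^n)^M) * (-(2 * ((n:ℝ) * (1-τ)^(n-1))))) τ := by
    intro τ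
    have h1 : HasDerivAt (fun τ : ℝ => 1 - τ) (-1) τ := (hasDerivAt_id τ).const_sub 1
    have h2 := h1.pow n
    have hc : HasDerivAt (fun τ : ℝ => 1 - (1-τ)^n) ((n:ℝ) * (1-τ)^(n-1)) τ := by
      have := h2.const_sub 1
      simpa using this
    have hcM := hc.pow M
    have h3c : HasDerivAt (fun τ : ℝ => 3 - 2*(1-(1-τ)^n)) (-(2 * ((n:ℝ) * (1-τ)^(n-1)))) τ := by
      have := (hc.const_mul 2).const_sub 3
      simpa using this
    have h := ((hasDerivAt_id τ).mul hcM).mul h3c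
    exact h.congr_deriv (by simp only [Pi.pow_apply, Pi.mul_apply, id_eq]; ring)
  apply monotoneOn_of_deriv_nonneg (convex_Icc 0 1)
  · fun_prop
  · intro τ hτ
    exact (hder τ).differentiableAt.differentiableWithinAt
  · intro τ hτ
    rw [interior_Icc] at hτ
    obtain ⟨h0, h1⟩ := hτ
    rw [(hder τ).deriv]
    set s : ℝ := 1 - τ with hs
    set c : ℝ := 1 - s^n with hc
    set D : ℝ := (n:ℝ) * s^(n-1) with hD
    have hs0 : (0:ℝ) ≤ s := by linarith
    have hs1 : s ≤ 1 := by linarith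
    have hsn0 : (0:ℝ) ≤ s^n := by positivity
    have hsn1 : s^n ≤ 1 := pow_le_one₀ hs0 hs1
    have hc0 : 0 ≤ c := by rw [hc]; linarith
    have hc1 : c ≤ 1 := by rw [hc]; linarith
    have hD0 : 0 ≤ D := by positivity
    have hkey : τ * D ≤ c := by
      have := key_amgm n s hs0 hs1
      rw [hc, hD]
      calc τ * ((n:ℝ) * s^(n-1)) = (n:ℝ) * (1 - s) * s^(n-1) := by rw [hs]; ring
        _ ≤ 1 - s^n := this
    set K : ℝ := c^(M-1) with hK
    have hK0 : 0 ≤ K := by rw [hK]; positivity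
    have hcM : c^M = c * K := by
      rw [hK, ← pow_succ']
      congr 1; omega
    have hbr : 0 ≤ c*(3-2*c) + τ*D*((M:ℝ)*(3-2*c) - 2*c) := by
      have hM1 : (1:ℝ) ≤ (M:ℝ) := by exact_mod_cast hM
      rcases le_or_gt (2*c) ((M:ℝ)*(3-2*c)) with h | h
      · have h30 : 0 ≤ 3 - 2*c := by linarith
        have := mul_nonneg (mul_nonneg h0.le hD0) (by linarith : (0:ℝ) ≤ (M:ℝ)*(3-2*c) - 2*c)
        nlinarith
      · have hneg : (M:ℝ)*(3-2*c) - 2*c < 0 := by linarith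
        have hstep : τ*D*((M:ℝ)*(3-2*c) - 2*c) ≥ c*((M:ℝ)*(3-2*c) - 2*c) := by
          have := mul_nonneg (by linarith : 0 ≤ c - τ*D) (by linarith : 0 ≤ 2*c - (M:ℝ)*(3-2*c))
          nlinarith
        have h2 : 0 ≤ c*((M:ℝ)+1)*(3-2*c) - c*(2*c) := by
          have h30 : 0 ≤ 3 - 2*c := by linarith
          nlinarith
        nlinarith
    have hgoal : ((c^M + τ * ((M:ℕ) * c^(M-1) * D)) * (3 - 2*c) + (τ * c^M) * (-(2*D)))
        = K * (c*(3-2*c) + τ*D*((M:ℝ)*(3-2*c) - 2*c)) := by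
      rw [hcM, hK]; push_cast; ring
    rw [hgoal]
    exact mul_nonneg hK0 hbr
lemma one_le_alphaB (m j : ℕ) (hj : j ≤ m) (c : ℝ) (hc0 : 0 ≤ c) (hc1 : c ≤ 1) :
    (1:ℝ) ≤ alphaB m j c := by
  rw [alphaB_eq m j hj c]
  have h1 : (1:ℝ) ≤ 2^j := one_le_pow₀ (by norm_num)
  have h2 : (0:ℝ) ≤ ∑ k ∈ Finset.Icc 1 (m-j), (2:ℝ)^(j+k-1) * c^k := by
    apply Finset.sum_nonneg
    intro k _
    exact mul_nonneg (by positivity) (pow_nonneg hc0 k)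
  have h3 : (0:ℝ) ≤ 2^m * c^(m-j) * (1-c) :=
    mul_nonneg (mul_nonneg (by positivity) (pow_nonneg hc0 _)) (by linarith)
  linarith

/-- Strict monotonicity of `τ ↦ τ α_m(1-(1-τ)^n)`. -/
lemma Gm_strictMono (m n : ℕ) (hn : 1 ≤ n) :
    StrictMonoOn (fun τ : ℝ => τ * alphaB m m (1-(1-τ)^n)) (Set.Icc 0 1) := by
  intro x hx y hy hxy
  have h := gm_strictMono n hn hx hy hxy
  simp only [alphaB_top]
  have ex : x * ((2:ℝ)^m + 2^m * (1 - (1-(1-x)^n))) = 2^m * (x * (1 + (1-x)^n)) := by ring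
  have ey : y * ((2:ℝ)^m + 2^m * (1 - (1-(1-y)^n))) = 2^m * (y * (1 + (1-y)^n)) := by ring
  rw [ex, ey]
  have h2 : (0:ℝ) < 2^m := by positivity
  exact mul_lt_mul_of_pos_left h h2

/-- Strict monotonicity of `τ ↦ τ α_0(1-(1-τ)^n)`. -/
lemma G0_strictMono (m n : ℕ) (hm : 1 ≤ m) (hn : 1 ≤ n) :
    StrictMonoOn (fun τ : ℝ => τ * alphaB m 0 (1-(1-τ)^n)) (Set.Icc 0 1) := by
  obtain ⟨m', rfl⟩ : ∃ m', m = m'+1 := ⟨m-1, by omega⟩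
  have hid : ∀ τ : ℝ, τ * alphaB (m'+1) 0 (1-(1-τ)^n)
      = τ + (∑ k ∈ Finset.Icc 1 m', (2:ℝ)^(k-1) * (τ * (1-(1-τ)^n)^k))
        + 2^m' * (τ * (1-(1-τ)^n)^(m'+1) * (3 - 2*(1-(1-τ)^n))) := by
    intro τ
    set c : ℝ := 1-(1-τ)^n with hc
    rw [alphaB_eq (m'+1) 0 (by omega) c]
    simp only [Nat.zero_add, Nat.sub_zero]
    rw [Finset.sum_Icc_succ_top (by omega : 1 ≤ m'+1)]
    have hS : (∑ k ∈ Finset.Icc 1 m', (2:ℝ)^(k-1)*(τ*c^k))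
        = τ * ∑ k ∈ Finset.Icc 1 m', (2:ℝ)^(k-1)*c^k := by
      rw [Finset.mul_sum]
      exact Finset.sum_congr rfl (fun k _ => by ring)
    rw [hS]
    simp only [Nat.add_sub_cancel]
    ring
  intro x hx y hy hxy
  simp only [hid]
  obtain ⟨hx0, hx1⟩ := hx
  obtain ⟨hy0, hy1⟩ := hy
  have hCmono : (1:ℝ)-(1-x)^n ≤ 1-(1-y)^n := by
    have : ((1:ℝ)-y)^n ≤ (1-x)^n := pow_le_pow_left₀ (by linarith) (by linarith) n
    linarith
  have hCx0 : (0:ℝ) ≤ 1-(1-x)^n := by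
    have : ((1:ℝ)-x)^n ≤ 1 := pow_le_one₀ (by linarith) (by linarith)
    linarith
  have hsum : (∑ k ∈ Finset.Icc 1 m', (2:ℝ)^(k-1) * (x * (1-(1-x)^n)^k))
      ≤ ∑ k ∈ Finset.Icc 1 m', (2:ℝ)^(k-1) * (y * (1-(1-y)^n)^k) := by
    apply Finset.sum_le_sum
    intro k _
    have hp : ((1:ℝ)-(1-x)^n)^k ≤ (1-(1-y)^n)^k := pow_le_pow_left₀ hCx0 hCmono k
    have hp0 : (0:ℝ) ≤ (1-(1-x)^n)^k := pow_nonneg hCx0 k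
    have : x * (1-(1-x)^n)^k ≤ y * (1-(1-y)^n)^k := by nlinarith
    have h2 : (0:ℝ) ≤ 2^(k-1) := by positivity
    nlinarith
  have hB := B_monotone n (m'+1) hn (by omega) ⟨hx0, hx1⟩ ⟨hy0, hy1⟩ hxy.le
  simp only at hB
  have hB2 : (2:ℝ)^m' * (x * (1-(1-x)^n)^(m'+1) * (3 - 2*(1-(1-x)^n)))
      ≤ 2^m' * (y * (1-(1-y)^n)^(m'+1) * (3 - 2*(1-(1-y)^n))) := by
    have h2 : (0:ℝ) ≤ 2^m' := by positivity
    exact mul_le_mul_of_nonneg_left hB h2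
  linarith

/-- For every reset distribution `q` and `N ≥ 2`, the fixed-point attempt probability
satisfies `τ̂(q) ∈ [τ(m-1;0), τ(0;1)]`, where `τ(m-1;0)` and `τ(0;1)` are the fixed-point
attempt probabilities of RandomReset(m-1;0) and RandomReset(0;1). -/
theorem fixedPoint_mem_RR_range (m CWmin N : ℕ) (hm : 1 ≤ m) (hCW : 2 ≤ CWmin) (hN : 2 ≤ N)
    (q : Fin (m + 1) → ℝ) (hq : IsResetDist m q)
    (τq τlo τhi : ℝ)
    (hτq : IsFixedPointQ m CWmin N q τq)
    (hτlo : IsFixedPointRR m CWmin N (m - 1) 0 τlo)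
    (hτhi : IsFixedPointRR m CWmin N 0 1 τhi) :
    τq ∈ Set.Icc τlo τhi := by
  obtain ⟨hq0, hq1⟩ := hq
  obtain ⟨hτqI, hτqE⟩ := hτq
  obtain ⟨hτloI, hτloE⟩ := hτlo
  obtain ⟨hτhiI, hτhiE⟩ := hτhi
  have hn1 : 1 ≤ N - 1 := by omega
  have hκ : (0:ℝ) < kappa0 CWmin := by
    have h0 : (0:ℝ) < (CWmin:ℝ) := by exact_mod_cast (by omega : 0 < CWmin)
    rw [kappa0]; positivity
  have hC : ∀ τ : ℝ, 0 ≤ τ → τ ≤ 1 → 0 ≤ 1-(1-τ)^(N-1) ∧ 1-(1-τ)^(N-1) ≤ 1 := by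
    intro τ h0 h1
    constructor
    · have : ((1:ℝ)-τ)^(N-1) ≤ 1 := pow_le_one₀ (by linarith) (by linarith)
      linarith
    · have : (0:ℝ) ≤ (1-τ)^(N-1) := pow_nonneg (by linarith) (N-1)
      linarith
  obtain ⟨hcq0, hcq1⟩ := hC τq hτqI.1 hτqI.2
  obtain ⟨hclo0, hclo1⟩ := hC τlo hτloI.1 hτloI.2
  obtain ⟨hchi0, hchi1⟩ := hC τhi hτhiI.1 hτhiI.2
  -- the denominator for q
  set cq : ℝ := 1-(1-τq)^(N-1) with hcq
  set Dq : ℝ := ∑ j : Fin (m+1), q j * alphaB m (j:ℕ) cq with hDq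
  have hDq_low : alphaB m 0 cq ≤ Dq := by
    calc alphaB m 0 cq = ∑ j : Fin (m+1), q j * alphaB m 0 cq := by
          rw [← Finset.sum_mul, hq1, one_mul]
      _ ≤ Dq := by
          apply Finset.sum_le_sum
          intro j _
          exact mul_le_mul_of_nonneg_left
            (alphaB_bot_le m (j:ℕ) (Fin.is_le j) cq hcq0 hcq1) (hq0 j)
  have hDq_up : Dq ≤ alphaB m m cq := by
    calc Dq ≤ ∑ j : Fin (m+1), q j * alphaB m m cq := by
          apply Finset.sum_le_sum
          intro j _
          exact mul_le_mul_of_nonneg_left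
            (alphaB_le_top m (j:ℕ) (Fin.is_le j) cq hcq0 hcq1) (hq0 j)
      _ = alphaB m m cq := by rw [← Finset.sum_mul, hq1, one_mul]
  have hα0_pos : (1:ℝ) ≤ alphaB m 0 cq := one_le_alphaB m 0 (by omega) cq hcq0 hcq1
  have hDq_pos : (0:ℝ) < Dq := by linarith
  have hq_eq : τq * Dq = kappa0 CWmin := by
    rw [tauHatC] at hτqE
    exact (eq_div_iff hDq_pos.ne').mp hτqE
  -- simplify the two RandomReset denominators
  have hRRlo : ∀ c : ℝ, tauRRC m CWmin (m-1) 0 c = kappa0 CWmin / alphaB m m c := by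
    intro c
    rw [tauRRC]
    have h1 : (m-1) + 1 = m := by omega
    rw [h1, Finset.Icc_self, Finset.sum_singleton]
    have h2 : ((m:ℝ) - ((m-1 : ℕ):ℝ)) = 1 := by
      have h3 : ((m-1:ℕ):ℝ) = (m:ℝ) - 1 := by
        push_cast [hm]; ring
      rw [h3]; ring
    rw [h2]
    norm_num
  have hRRhi : ∀ c : ℝ, tauRRC m CWmin 0 1 c = kappa0 CWmin / alphaB m 0 c := by
    intro c
    rw [tauRRC]
    norm_num
  rw [hRRlo] at hτloE
  rw [hRRhi] at hτhiE
  have hαlo_pos : (0:ℝ) < alphaB m m (1-(1-τlo)^(N-1)) := by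
    have := one_le_alphaB m m le_rfl _ hclo0 hclo1
    linarith
  have hαhi_pos : (0:ℝ) < alphaB m 0 (1-(1-τhi)^(N-1)) := by
    have := one_le_alphaB m 0 (by omega) _ hchi0 hchi1
    linarith
  have hlo_eq : τlo * alphaB m m (1-(1-τlo)^(N-1)) = kappa0 CWmin :=
    (eq_div_iff hαlo_pos.ne').mp hτloE
  have hhi_eq : τhi * alphaB m 0 (1-(1-τhi)^(N-1)) = kappa0 CWmin :=
    (eq_div_iff hαhi_pos.ne').mp hτhiE
  -- lower bound
  constructor
  · by_contra hcon
    push_neg at hcon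
    have hlt := Gm_strictMono m (N-1) hn1 hτqI hτloI hcon
    simp only at hlt
    have h2 : kappa0 CWmin ≤ τq * alphaB m m cq := by
      calc kappa0 CWmin = τq * Dq := hq_eq.symm
        _ ≤ τq * alphaB m m cq := mul_le_mul_of_nonneg_left hDq_up hτqI.1
    rw [← hcq] at hlt
    linarith [hlt, h2, hlo_eq]
  · by_contra hcon
    push_neg at hcon
    have hlt := G0_strictMono m (N-1) hm hn1 hτhiI hτqI hcon
    simp only at hlt
    have h2 : τq * alphaB m 0 cq ≤ kappa0 CWmin := by
      calc τq * alphaB m 0 cq ≤ τq * Dq := mul_le_mul_of_nonneg_left hDq_low hτqI.1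
        _ = kappa0 CWmin := hq_eq
    rw [← hcq] at hlt
    linarith [hlt, h2, hhi_eq]
end

section
/- Suppose m ≥ 2 and N ≥ 2. For every j ∈ {0,…,m−2}, the fixed-point attempt probabilities satisfy the interleaving chain τ(j+1; 0) ≤ τ(j; 0) ≤ τ(j+1; 1) ≤ τ(j; 1); in particular the ranges of p_0 ↦ τ(j;p_0) for consecutive values of j overlap. -/
open Finset

lemma alphaB_last (m : ℕ) (c : ℝ) : alphaB m m c = 2 ^ m * (2 - c) := by
  simp [alphaB]; ring

lemma alphaB_rec (m j : ℕ) (hj : j < m) (c : ℝ) :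
    alphaB m j c = (1 - c) * 2 ^ j + c * alphaB m (j + 1) c := by
  unfold alphaB
  rw [← Finset.insert_Icc_add_one_left_eq_Icc hj.le, Finset.sum_insert (by simp)]
  have h1 : ∑ i ∈ Finset.Icc (j+1) m, (2 : ℝ) ^ i * c ^ (i - j)
      = c * ∑ i ∈ Finset.Icc (j+1) m, (2 : ℝ) ^ i * c ^ (i - (j+1)) := by
    rw [Finset.mul_sum]
    refine Finset.sum_congr rfl fun i hi => ?_
    have hij : j + 1 ≤ i := (Finset.mem_Icc.mp hi).1
    have : i - j = (i - (j+1)) + 1 := by omega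
    rw [this, pow_succ]; ring
  have h2 : c ^ (m - j) = c * c ^ (m - (j+1)) := by
    have : m - j = (m - (j+1)) + 1 := by omega
    rw [this, pow_succ]; ring
  rw [h1, h2]; simp; ring

lemma alphaB_diff (m j : ℕ) : Differentiable ℝ (alphaB m j) := by
  unfold alphaB
  exact (((differentiable_const _).sub differentiable_id).mul
    (Differentiable.fun_sum fun i _ => (differentiable_const _).mul (differentiable_pow _))).add
    ((differentiable_const _).mul (differentiable_pow _))

lemma alphaB_deriv_last (m : ℕ) (c : ℝ) : deriv (alphaB m m) c = -(2 ^ m) := by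
  have hfun : alphaB m m = fun x => (2:ℝ) ^ m * (2 - x) := funext (alphaB_last m)
  rw [hfun]
  have h : HasDerivAt (fun x : ℝ => (2:ℝ) ^ m * (2 - x)) (-(2 ^ m)) c := by
    simpa using (((hasDerivAt_id c).const_sub 2).const_mul ((2:ℝ) ^ m))
  exact h.deriv

lemma alphaB_deriv_rec (m j : ℕ) (hj : j < m) (c : ℝ) :
    deriv (alphaB m j) c = -(2 ^ j) + alphaB m (j + 1) c + c * deriv (alphaB m (j + 1)) c := by
  have hfun : alphaB m j = fun x => (1 - x) * 2 ^ j + x * alphaB m (j + 1) x :=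
    funext (alphaB_rec m j hj)
  have hd := (alphaB_diff m (j + 1)).differentiableAt (x := c)
  have h1 : HasDerivAt (fun x : ℝ => (1 - x) * 2 ^ j) (-(2 ^ j)) c := by
    simpa using ((hasDerivAt_id c).const_sub 1).mul_const ((2:ℝ) ^ j)
  have h2 : HasDerivAt (fun x : ℝ => x * alphaB m (j + 1) x)
      (1 * alphaB m (j + 1) c + c * deriv (alphaB m (j + 1)) c) c :=
    (hasDerivAt_id c).mul hd.hasDerivAt
  rw [hfun, (h1.fun_add h2).deriv]; ring

lemma alphaB_bounds_aux (m : ℕ) : ∀ n, n ≤ m → ∀ c ∈ Set.Icc (0:ℝ) 1,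
    (2:ℝ) ^ (m - n) ≤ alphaB m (m - n) c ∧
      0 ≤ alphaB m (m - n) c + deriv (alphaB m (m - n)) c := by
  intro n
  induction n with
  | zero =>
    intro _ c hc
    obtain ⟨hc0, hc1⟩ := hc
    have hp := pow_pos (by norm_num : (0:ℝ) < 2) m
    rw [Nat.sub_zero, alphaB_last, alphaB_deriv_last]
    constructor <;> nlinarith
  | succ n ih =>
    intro hn c hc
    obtain ⟨hc0, hc1⟩ := hc
    set j := m - (n + 1) with hjdef
    have hj : j < m := by omega
    have hsucc : j + 1 = m - n := by omega
    obtain ⟨ih1, ih2⟩ := ih (by omega) c ⟨hc0, hc1⟩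
    rw [← hsucc] at ih1 ih2
    have hrec := alphaB_rec m j hj c
    have hder := alphaB_deriv_rec m j hj c
    have hp := pow_pos (by norm_num : (0:ℝ) < 2) j
    have h2j : (2:ℝ) ^ (j + 1) = 2 * 2 ^ j := by ring
    rw [h2j] at ih1
    have hmul : 0 ≤ c * (alphaB m (j + 1) c + deriv (alphaB m (j + 1)) c) :=
      mul_nonneg hc0 ih2
    constructor
    · rw [hrec]; nlinarith
    · rw [hrec, hder]; nlinarith

lemma alphaB_ge (m j : ℕ) (hj : j ≤ m) {c : ℝ} (hc : c ∈ Set.Icc (0:ℝ) 1) :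
    (2:ℝ) ^ j ≤ alphaB m j c := by
  have := (alphaB_bounds_aux m (m - j) (by omega) c hc).1
  rwa [show m - (m - j) = j by omega] at this

lemma alphaB_add_deriv_nonneg (m j : ℕ) (hj : j ≤ m) {c : ℝ} (hc : c ∈ Set.Icc (0:ℝ) 1) :
    0 ≤ alphaB m j c + deriv (alphaB m j) c := by
  have := (alphaB_bounds_aux m (m - j) (by omega) c hc).2
  rwa [show m - (m - j) = j by omega] at this

lemma alphaB_succ_lt (m j : ℕ) (hj : j < m) {c : ℝ} (hc0 : 0 ≤ c) (hc1 : c < 1) :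
    alphaB m j c < alphaB m (j + 1) c := by
  have hge := alphaB_ge m (j + 1) (by omega) ⟨hc0, hc1.le⟩
  have hrec := alphaB_rec m j hj c
  have hp := pow_pos (by norm_num : (0:ℝ) < 2) j
  have h2j : (2:ℝ) ^ (j + 1) = 2 * 2 ^ j := by ring
  rw [h2j] at hge
  nlinarith [mul_pos (by linarith : (0:ℝ) < 1 - c) hp]

lemma alphaB_lt_of_lt (m i k : ℕ) (hik : i < k) (hk : k ≤ m) {c : ℝ}
    (hc0 : 0 ≤ c) (hc1 : c < 1) : alphaB m i c < alphaB m k c := by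
  induction k, hik using Nat.le_induction with
  | base => exact alphaB_succ_lt m i (by omega) hc0 hc1
  | succ k hik ih =>
    exact (ih (by omega)).trans (alphaB_succ_lt m k (by omega) hc0 hc1)

lemma alphaB_pos (m j : ℕ) (hj : j ≤ m) {c : ℝ} (hc : c ∈ Set.Icc (0:ℝ) 1) :
    0 < alphaB m j c :=
  lt_of_lt_of_le (pow_pos (by norm_num) j) (alphaB_ge m j hj hc)

lemma tcp_le (n : ℕ) {τ : ℝ} (h0 : 0 ≤ τ) (h1 : τ ≤ 1) :
    τ * (n * (1 - τ) ^ (n - 1)) ≤ 1 := by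
  set u : ℝ := 1 - τ with hu
  have hu0 : 0 ≤ u := by linarith
  have hu1 : u ≤ 1 := by linarith
  have hgeom : (1 - u) * ∑ i ∈ range n, u ^ i = 1 - u ^ n := by
    have := geom_sum_mul u n; linarith [this]
  have hsum : (n : ℝ) * u ^ (n - 1) ≤ ∑ i ∈ range n, u ^ i := by
    have h := Finset.card_nsmul_le_sum (range n) (fun i => u ^ i) (u ^ (n - 1))
      (fun i hi => pow_le_pow_of_le_one hu0 hu1 (by
        have := Finset.mem_range.mp hi; omega))
    simpa [nsmul_eq_mul] using h
  have h2 : (1 - u) * ((n : ℝ) * u ^ (n - 1)) ≤ (1 - u) * ∑ i ∈ range n, u ^ i :=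
    mul_le_mul_of_nonneg_left hsum (by linarith)
  have h3 : (0:ℝ) ≤ u ^ n := pow_nonneg hu0 n
  have hτu : τ = 1 - u := by linarith
  rw [hτu]; nlinarith

lemma hasDerivAt_g (n : ℕ) (τ : ℝ) :
    HasDerivAt (fun τ : ℝ => 1 - (1 - τ) ^ n) ((n : ℝ) * (1 - τ) ^ (n - 1)) τ := by
  have h1 : HasDerivAt (fun τ : ℝ => 1 - τ) (-1) τ := by
    simpa using (hasDerivAt_id τ).const_sub 1
  simpa using (h1.pow n).const_sub 1

lemma key_mono (n : ℕ) (D : ℝ → ℝ) (hD : Differentiable ℝ D)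
    (h0 : ∀ c ∈ Set.Icc (0:ℝ) 1, 0 ≤ D c)
    (h1 : ∀ c ∈ Set.Icc (0:ℝ) 1, 0 ≤ D c + deriv D c) :
    MonotoneOn (fun τ => τ * D (1 - (1 - τ) ^ n)) (Set.Icc (0:ℝ) 1) := by
  have hH : ∀ τ : ℝ, HasDerivAt (fun τ => τ * D (1 - (1 - τ) ^ n))
      (D (1 - (1 - τ) ^ n) + τ * (deriv D (1 - (1 - τ) ^ n) * ((n : ℝ) * (1 - τ) ^ (n - 1)))) τ := by
    intro τ
    have hcomp : HasDerivAt (fun τ : ℝ => D (1 - (1 - τ) ^ n))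
        (deriv D (1 - (1 - τ) ^ n) * ((n : ℝ) * (1 - τ) ^ (n - 1))) τ :=
      (hD.differentiableAt.hasDerivAt).comp τ (hasDerivAt_g n τ)
    simpa using (hasDerivAt_id' τ).fun_mul hcomp
  apply monotoneOn_of_deriv_nonneg (convex_Icc 0 1)
  · exact fun τ _ => ((hH τ).continuousAt).continuousWithinAt
  · exact fun τ _ => ((hH τ).differentiableAt).differentiableWithinAt
  · intro τ hτ
    rw [interior_Icc] at hτ
    obtain ⟨hτ0, hτ1⟩ := hτ
    rw [(hH τ).deriv]
    set c : ℝ := 1 - (1 - τ) ^ n with hc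
    have hc1 : c ∈ Set.Icc (0:ℝ) 1 := by
      constructor
      · have : (1 - τ) ^ n ≤ 1 := pow_le_one₀ (by linarith) (by linarith)
        simp only [hc]; linarith
      · have : (0:ℝ) ≤ (1 - τ) ^ n := pow_nonneg (by linarith) n
        simp only [hc]; linarith
    set s : ℝ := τ * ((n : ℝ) * (1 - τ) ^ (n - 1)) with hs
    have hs0 : 0 ≤ s :=
      mul_nonneg hτ0.le (mul_nonneg (Nat.cast_nonneg n) (pow_nonneg (by linarith) _))
    have hs1 : s ≤ 1 := tcp_le n hτ0.le hτ1.le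
    have hD0 := h0 c hc1
    have hD1 := h1 c hc1
    have heq : D c + τ * (deriv D c * ((n : ℝ) * (1 - τ) ^ (n - 1)))
        = (1 - s) * D c + s * (D c + deriv D c) := by rw [hs]; ring
    rw [heq]
    have h4 := mul_nonneg (by linarith : (0:ℝ) ≤ 1 - s) hD0
    have h5 := mul_nonneg hs0 hD1
    linarith

lemma scaled_mono (m l n : ℕ) (hl : l ≤ m) (r : ℝ) (hr : 0 ≤ r) :
    MonotoneOn (fun τ => τ * (r * ∑ i ∈ Icc l m, alphaB m i (1 - (1 - τ) ^ n)))
      (Set.Icc (0:ℝ) 1) := by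
  apply key_mono n (fun x => r * ∑ i ∈ Icc l m, alphaB m i x)
  · exact Differentiable.const_mul (Differentiable.fun_sum fun i _ => alphaB_diff m i) r
  · intro c hc
    exact mul_nonneg hr (Finset.sum_nonneg fun i hi =>
      (alphaB_pos m i (Finset.mem_Icc.mp hi).2 hc).le)
  · intro c hc
    have hder : deriv (fun x => r * ∑ i ∈ Icc l m, alphaB m i x) c
        = r * ∑ i ∈ Icc l m, deriv (alphaB m i) c :=
      (HasDerivAt.const_mul r (HasDerivAt.fun_sum fun i _ =>
        ((alphaB_diff m i).differentiableAt).hasDerivAt)).deriv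
    rw [hder, ← mul_add, ← Finset.sum_add_distrib]
    exact mul_nonneg hr (Finset.sum_nonneg fun i hi =>
      alphaB_add_deriv_nonneg m i (Finset.mem_Icc.mp hi).2 hc)

lemma alpha_mono (m l n : ℕ) (hl : l ≤ m) :
    MonotoneOn (fun τ => τ * alphaB m l (1 - (1 - τ) ^ n)) (Set.Icc (0:ℝ) 1) :=
  key_mono n (alphaB m l) (alphaB_diff m l)
    (fun c hc => (alphaB_pos m l hl hc).le)
    (fun c hc => alphaB_add_deriv_nonneg m l hl hc)

lemma fp_le (n : ℕ) (κ : ℝ) (Dsm Dlg : ℝ → ℝ) (x y : ℝ)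
    (hx : x ∈ Set.Icc (0:ℝ) 1) (hy : y ∈ Set.Icc (0:ℝ) 1) (hx1 : x < 1) (hxpos : 0 < x)
    (hmono : MonotoneOn (fun τ => τ * Dsm (1 - (1 - τ) ^ n)) (Set.Icc (0:ℝ) 1))
    (hlt : ∀ c : ℝ, 0 ≤ c → c < 1 → Dsm c < Dlg c)
    (hfx : x * Dlg (1 - (1 - x) ^ n) = κ)
    (hfy : y * Dsm (1 - (1 - y) ^ n) = κ) :
    x ≤ y := by
  by_contra hcon
  push_neg at hcon
  have hcx0 : (0:ℝ) ≤ 1 - (1 - x) ^ n := by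
    have : (1 - x) ^ n ≤ 1 := pow_le_one₀ (by linarith [hx.2]) (by linarith [hx.1])
    linarith
  have hcx1 : 1 - (1 - x) ^ n < 1 := by
    have : 0 < (1 - x) ^ n := pow_pos (by linarith) n
    linarith
  have h1 : x * Dsm (1 - (1 - x) ^ n) < x * Dlg (1 - (1 - x) ^ n) :=
    mul_lt_mul_of_pos_left (hlt _ hcx0 hcx1) hxpos
  have h2 : y * Dsm (1 - (1 - y) ^ n) ≤ x * Dsm (1 - (1 - x) ^ n) := hmono hy hx hcon.le
  linarith

set_option maxHeartbeats 2000000 in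
/-- For `m ≥ 2`, `N ≥ 2` and `j ∈ {0,…,m-2}`, the fixed-point attempt probabilities
interleave: `τ(j+1;0) ≤ τ(j;0) ≤ τ(j+1;1) ≤ τ(j;1)`, so the ranges of `p₀ ↦ τ(j;p₀)` for
consecutive `j` overlap. -/

theorem fixedPointRR_interleaving (m CWmin N : ℕ) (hm : 2 ≤ m) (hCW : 2 ≤ CWmin) (hN : 2 ≤ N)
    (j : ℕ) (hj : j ≤ m - 2)
    (a b d e : ℝ)
    (ha : IsFixedPointRR m CWmin N (j + 1) 0 a)
    (hb : IsFixedPointRR m CWmin N j 0 b)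
    (hd : IsFixedPointRR m CWmin N (j + 1) 1 d)
    (he : IsFixedPointRR m CWmin N j 1 e) :
    a ≤ b ∧ b ≤ d ∧ d ≤ e := by

  obtain ⟨haI, ha2⟩ := ha
  obtain ⟨hbI, hb2⟩ := hb
  obtain ⟨hdI, hd2⟩ := hd
  obtain ⟨heI, he2⟩ := he
  have hm2 : j + 2 ≤ m := by omega
  set t : ℕ := m - j - 1 with ht
  have ht1 : 1 ≤ t := by omega
  have htR : (t : ℝ) = (m : ℝ) - (j : ℝ) - 1 := by
    have h := congrArg (Nat.cast : ℕ → ℝ) (show t + (j + 1) = m by omega)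
    push_cast at h; linarith
  have htpos : (0:ℝ) < (t:ℝ) := by exact_mod_cast ht1
  have hr1eq : (m:ℝ) - (j:ℝ) = (t:ℝ) + 1 := by linarith
  have hr2eq : (m:ℝ) - ((j:ℝ) + 1) = (t:ℝ) := by linarith
  have hκpos : 0 < kappa0 CWmin := by
    unfold kappa0
    have h0 : (0:ℝ) < (CWmin:ℝ) := by exact_mod_cast (by omega : 0 < CWmin)
    positivity
  have hκ1 : kappa0 CWmin ≤ 1 := by
    unfold kappa0
    rw [div_le_one (by exact_mod_cast (by omega : 0 < CWmin))]
    exact_mod_cast hCW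
  have hcmem : ∀ x : ℝ, x ∈ Set.Icc (0:ℝ) 1 → (1 - (1 - x) ^ (N - 1)) ∈ Set.Icc (0:ℝ) 1 := by
    intro x hx
    constructor
    · have : (1 - x) ^ (N-1) ≤ 1 := pow_le_one₀ (by linarith [hx.2]) (by linarith [hx.1])
      linarith
    · have : (0:ℝ) ≤ (1 - x) ^ (N-1) := pow_nonneg (by linarith [hx.2]) _
      linarith
  have hS1split : ∀ x : ℝ, ∑ i ∈ Icc (j+1) m, alphaB m i x
      = alphaB m (j+1) x + ∑ i ∈ Icc (j+2) m, alphaB m i x := by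
    intro x
    rw [← Finset.insert_Icc_add_one_left_eq_Icc (show j+1 ≤ m by omega), Finset.sum_insert (by simp)]; rfl
  have hS2gt : ∀ x : ℝ, 0 ≤ x → x < 1 →
      (t:ℝ) * alphaB m (j+1) x < ∑ i ∈ Icc (j+2) m, alphaB m i x := by
    intro x hx0 hx1
    have hne : (Finset.Icc (j+2) m).Nonempty := by
      rw [Finset.nonempty_Icc]; omega
    have h := Finset.sum_lt_sum_of_nonempty hne
      (f := fun _ => alphaB m (j+1) x) (g := fun i => alphaB m i x)
      (fun i hi => alphaB_lt_of_lt m (j+1) i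
        (by have := (Finset.mem_Icc.mp hi).1; omega)
        (Finset.mem_Icc.mp hi).2 hx0 hx1)
    rw [Finset.sum_const, Nat.card_Icc, nsmul_eq_mul,
      (show m + 1 - (j + 2) = t by omega)] at h
    exact h
  have halpha2 : ∀ i : ℕ, 1 ≤ i → i ≤ m → ∀ x ∈ Set.Icc (0:ℝ) 1, (2:ℝ) ≤ alphaB m i x := by
    intro i hi1 him x hx
    refine le_trans ?_ (alphaB_ge m i him hx)
    calc (2:ℝ) = 2 ^ 1 := by norm_num
    _ ≤ 2 ^ i := pow_le_pow_right₀ one_le_two hi1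
  have hS2ge2 : ∀ x ∈ Set.Icc (0:ℝ) 1, (t:ℝ) * 2 ≤ ∑ i ∈ Icc (j+2) m, alphaB m i x := by
    intro x hx
    have h := Finset.card_nsmul_le_sum (Finset.Icc (j+2) m) (fun i => alphaB m i x) 2
      (fun i hi => halpha2 i (by have := (Finset.mem_Icc.mp hi).1; omega)
        (Finset.mem_Icc.mp hi).2 x hx)
    rw [Nat.card_Icc, nsmul_eq_mul, (show m + 1 - (j + 2) = t by omega)] at h
    exact h
  have hS1ge2 : ∀ x ∈ Set.Icc (0:ℝ) 1, ((t:ℝ) + 1) * 2 ≤ ∑ i ∈ Icc (j+1) m, alphaB m i x := by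
    intro x hx
    have h := Finset.card_nsmul_le_sum (Finset.Icc (j+1) m) (fun i => alphaB m i x) 2
      (fun i hi => halpha2 i (by have := (Finset.mem_Icc.mp hi).1; omega)
        (Finset.mem_Icc.mp hi).2 x hx)
    rw [Nat.card_Icc, nsmul_eq_mul, (show m + 1 - (j + 1) = t + 1 by omega)] at h
    push_cast at h
    exact h
  -- fixed point product equations and bounds
  -- a : index j+1, p0 = 0
  have hcaI := hcmem a haI
  have hden0' : ∀ c : ℝ, tauRRC m CWmin (j+1) 0 c = kappa0 CWmin /
      (((m:ℝ) - ((j:ℝ) + 1))⁻¹ * ∑ i ∈ Icc (j+2) m, alphaB m i c) := by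
    intro c; unfold tauRRC; push_cast; congr 1; ring
  have hden0 : ∀ c : ℝ, tauRRC m CWmin j 0 c = kappa0 CWmin /
      (((m:ℝ) - (j:ℝ))⁻¹ * ∑ i ∈ Icc (j+1) m, alphaB m i c) := by
    intro c; unfold tauRRC; congr 1; ring
  have hden1' : ∀ c : ℝ, tauRRC m CWmin (j+1) 1 c = kappa0 CWmin / alphaB m (j+1) c := by
    intro c; unfold tauRRC; congr 1; ring
  have hden1 : ∀ c : ℝ, tauRRC m CWmin j 1 c = kappa0 CWmin / alphaB m j c := by
    intro c; unfold tauRRC; congr 1; ring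
  have haeq : a = kappa0 CWmin /
      (((m:ℝ) - ((j:ℝ) + 1))⁻¹ * ∑ i ∈ Icc (j+2) m, alphaB m i (1 - (1 - a) ^ (N - 1))) :=
    ha2.trans (hden0' _)
  have hDa2 : 2 ≤ ((m:ℝ) - ((j:ℝ) + 1))⁻¹ * ∑ i ∈ Icc (j+2) m, alphaB m i (1 - (1 - a) ^ (N - 1)) := by
    rw [hr2eq, inv_mul_eq_div, le_div_iff₀ htpos]
    have := hS2ge2 _ hcaI; linarith
  have hDapos : (0:ℝ) < ((m:ℝ) - ((j:ℝ) + 1))⁻¹ * ∑ i ∈ Icc (j+2) m, alphaB m i (1 - (1 - a) ^ (N - 1)) := by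
    linarith
  have hfa : a * (((m:ℝ) - ((j:ℝ) + 1))⁻¹ * ∑ i ∈ Icc (j+2) m, alphaB m i (1 - (1 - a) ^ (N - 1)))
      = kappa0 CWmin := (eq_div_iff (ne_of_gt hDapos)).mp haeq
  have hapos : 0 < a := by rw [haeq]; exact div_pos hκpos hDapos
  have ha1 : a < 1 := by rw [haeq, div_lt_one hDapos]; linarith
  -- b : index j, p0 = 0
  have hcbI := hcmem b hbI
  have hbeq : b = kappa0 CWmin /
      (((m:ℝ) - (j:ℝ))⁻¹ * ∑ i ∈ Icc (j+1) m, alphaB m i (1 - (1 - b) ^ (N - 1))) :=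
    hb2.trans (hden0 _)
  have hDb2 : 2 ≤ ((m:ℝ) - (j:ℝ))⁻¹ * ∑ i ∈ Icc (j+1) m, alphaB m i (1 - (1 - b) ^ (N - 1)) := by
    rw [hr1eq, inv_mul_eq_div, le_div_iff₀ (by linarith)]
    have := hS1ge2 _ hcbI; linarith
  have hDbpos : (0:ℝ) < ((m:ℝ) - (j:ℝ))⁻¹ * ∑ i ∈ Icc (j+1) m, alphaB m i (1 - (1 - b) ^ (N - 1)) := by
    linarith
  have hfb : b * (((m:ℝ) - (j:ℝ))⁻¹ * ∑ i ∈ Icc (j+1) m, alphaB m i (1 - (1 - b) ^ (N - 1)))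
      = kappa0 CWmin := (eq_div_iff (ne_of_gt hDbpos)).mp hbeq
  have hbpos : 0 < b := by rw [hbeq]; exact div_pos hκpos hDbpos
  have hb1 : b < 1 := by rw [hbeq, div_lt_one hDbpos]; linarith
  -- d : index j+1, p0 = 1
  have hcdI := hcmem d hdI
  have hdeq : d = kappa0 CWmin / alphaB m (j+1) (1 - (1 - d) ^ (N - 1)) :=
    hd2.trans (hden1' _)
  have hDd2 : 2 ≤ alphaB m (j+1) (1 - (1 - d) ^ (N - 1)) :=
    halpha2 (j+1) (by omega) (by omega) _ hcdI
  have hDdpos : (0:ℝ) < alphaB m (j+1) (1 - (1 - d) ^ (N - 1)) := by linarith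
  have hfd : d * alphaB m (j+1) (1 - (1 - d) ^ (N - 1)) = kappa0 CWmin :=
    (eq_div_iff (ne_of_gt hDdpos)).mp hdeq
  have hdpos : 0 < d := by rw [hdeq]; exact div_pos hκpos hDdpos
  have hd1 : d < 1 := by rw [hdeq, div_lt_one hDdpos]; linarith
  -- e : index j, p0 = 1
  have hceI := hcmem e heI
  have heeq : e = kappa0 CWmin / alphaB m j (1 - (1 - e) ^ (N - 1)) :=
    he2.trans (hden1 _)
  have hDepos : (0:ℝ) < alphaB m j (1 - (1 - e) ^ (N - 1)) :=
    alphaB_pos m j (by omega) hceI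
  have hfe : e * alphaB m j (1 - (1 - e) ^ (N - 1)) = kappa0 CWmin :=
    (eq_div_iff (ne_of_gt hDepos)).mp heeq
  -- strict denominator comparisons
  have hlt1 : ∀ c : ℝ, 0 ≤ c → c < 1 →
      ((m:ℝ) - (j:ℝ))⁻¹ * ∑ i ∈ Icc (j+1) m, alphaB m i c
        < ((m:ℝ) - ((j:ℝ) + 1))⁻¹ * ∑ i ∈ Icc (j+2) m, alphaB m i c := by
    intro c h0 h1
    have h := hS2gt c h0 h1
    rw [hr1eq, hr2eq, inv_mul_eq_div, inv_mul_eq_div,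
      div_lt_div_iff₀ (by linarith) htpos, hS1split]
    nlinarith
  have hlt2 : ∀ c : ℝ, 0 ≤ c → c < 1 →
      alphaB m (j+1) c < ((m:ℝ) - (j:ℝ))⁻¹ * ∑ i ∈ Icc (j+1) m, alphaB m i c := by
    intro c h0 h1
    have h := hS2gt c h0 h1
    rw [hr1eq, inv_mul_eq_div, lt_div_iff₀ (by linarith), hS1split]
    nlinarith
  have hlt3 : ∀ c : ℝ, 0 ≤ c → c < 1 → alphaB m j c < alphaB m (j+1) c :=
    fun c h0 h1 => alphaB_succ_lt m j (by omega) h0 h1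
  refine ⟨?_, ?_, ?_⟩
  · exact fp_le (N-1) (kappa0 CWmin)
      (fun x => ((m:ℝ) - (j:ℝ))⁻¹ * ∑ i ∈ Icc (j+1) m, alphaB m i x)
      (fun x => ((m:ℝ) - ((j:ℝ) + 1))⁻¹ * ∑ i ∈ Icc (j+2) m, alphaB m i x)
      a b haI hbI ha1 hapos
      (scaled_mono m (j+1) (N-1) (by omega) _ (by rw [hr1eq]; positivity))
      hlt1 hfa hfb
  · exact fp_le (N-1) (kappa0 CWmin)
      (fun x => alphaB m (j+1) x)
      (fun x => ((m:ℝ) - (j:ℝ))⁻¹ * ∑ i ∈ Icc (j+1) m, alphaB m i x)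
      b d hbI hdI hb1 hbpos
      (alpha_mono m (j+1) (N-1) (by omega))
      hlt2 hfb hfd
  · exact fp_le (N-1) (kappa0 CWmin)
      (fun x => alphaB m j x)
      (fun x => alphaB m (j+1) x)
      d e hdI heI hd1 hdpos
      (alpha_mono m j (N-1) (by omega))
      hlt3 hfd hfe
end
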